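/- arXiv:1303.0819 — 3 statements merged into one kernel-verified Lean document; each statement's English description precedes it below -/
import Mathlib

section
/- For complex t with |t| < 1, real γ, and complex z, Σ_{ψ₀=0}^{∞} (t^{ψ₀}/ψ₀!) A_{ψ₀}(γ; z) = (1-t)^{γ-2} exp(-zt/(1-t)), where A_{ψ₀}(γ; z) = (Γ(ψ₀+2-γ)/Γ(2-γ)) Σ_{n=0}^{ψ₀} ((-ψ₀)_n/(n!(2-γ)_n)) zⁿ. -/
open Complex

/-- derivative step for (1-s)^c -/
lemma hasDerivAt_one_sub_cpow (c : ℂ) {s : ℂ} (hs : ‖s‖ < 1) :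
    HasDerivAt (fun u : ℂ => (1 - u) ^ c) (-(c * (1 - s) ^ (c - 1))) s := by
  have hre : 0 < (1 - s).re := by
    have := Complex.abs_re_le_norm s
    simp only [Complex.sub_re, Complex.one_re]
    have : |s.re| < 1 := lt_of_le_of_lt (Complex.abs_re_le_norm s) hs
    linarith [abs_lt.mp this |>.2]
  have h1 : HasDerivAt (fun u : ℂ => 1 - u) (-1) s := by
    simpa using ((hasDerivAt_id s).const_sub 1)
  have := h1.cpow_const (c := c) (Or.inl hre)
  convert this using 1
  ring

lemma iteratedDeriv_one_sub_cpow (a : ℂ) (n : ℕ) {s : ℂ} (hs : ‖s‖ < 1) :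
    iteratedDeriv n (fun u : ℂ => (1 - u) ^ (-a)) s
      = (ascPochhammer ℂ n).eval a * (1 - s) ^ (-a - n) := by
  induction n generalizing s with
  | zero => simp
  | succ n ih =>
    rw [iteratedDeriv_succ]
    have hball : Metric.ball (0:ℂ) 1 ∈ nhds s := by
      refine Metric.isOpen_ball.mem_nhds ?_
      simpa [Metric.mem_ball, Complex.dist_eq] using hs
    have heq : (iteratedDeriv n (fun u : ℂ => (1 - u) ^ (-a)))
        =ᶠ[nhds s] fun u => (ascPochhammer ℂ n).eval a * (1 - u) ^ (-a - n) := by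
      filter_upwards [hball] with u hu
      exact ih (by simpa [Metric.mem_ball, Complex.dist_eq] using hu)
    rw [heq.deriv_eq]
    have hd : HasDerivAt (fun u : ℂ => (ascPochhammer ℂ n).eval a * (1 - u) ^ (-a - n))
        ((ascPochhammer ℂ n).eval a * (-((-a - n) * (1 - s) ^ (-a - n - 1)))) s :=
      (hasDerivAt_one_sub_cpow (-a - n) hs).const_mul _
    rw [hd.deriv, ascPochhammer_succ_eval]
    push_cast
    ring_nf

lemma hasSum_binomial (a : ℂ) {t : ℂ} (ht : ‖t‖ < 1) :
    HasSum (fun n : ℕ => (ascPochhammer ℂ n).eval a * t ^ n / (Nat.factorial n : ℂ))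
      ((1 - t) ^ (-a)) := by
  set f : ℂ → ℂ := fun u => (1 - u) ^ (-a) with hf
  set R : NNReal := ⟨(‖t‖ + 1) / 2, by positivity⟩ with hR
  have habs : ‖t‖ < R := by
    change ‖t‖ < (‖t‖ + 1) / 2; linarith
  have hR1 : (R : ℝ) < 1 := by
    change (‖t‖ + 1) / 2 < 1; linarith
  have hR0 : 0 < R := NNReal.coe_pos.mp (lt_of_le_of_lt (norm_nonneg t) habs)
  have hd : DifferentiableOn ℂ f (Metric.closedBall 0 R) := by
    intro s hs
    have hs1 : ‖s‖ < 1 := by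
      have : ‖s‖ ≤ R := by
        simpa [Complex.dist_eq] using hs
      linarith
    exact ((hasDerivAt_one_sub_cpow (-a) hs1).differentiableAt).differentiableWithinAt
  have hps := hd.hasFPowerSeriesOnBall hR0
  have hmem : t ∈ Metric.eball (0 : ℂ) R := by
    rw [Metric.mem_eball, edist_zero_right]
    rw [← ENNReal.coe_lt_coe] at *
    calc (‖t‖₊ : ENNReal) = ENNReal.ofReal ‖t‖ := by
            rw [ENNReal.ofReal, norm_toNNReal]
      _ < R := by
            rw [ENNReal.ofReal_lt_coe_iff (norm_nonneg t)] ; exact habs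
  have hsum := hps.hasSum_iteratedFDeriv hmem
  simp only [zero_add] at hsum
  have h0 : f t = (1 - t) ^ (-a) := rfl
  rw [h0] at hsum
  convert hsum using 2 with n
  · rfl
  rw [iteratedFDeriv_apply_eq_iteratedDeriv_mul_prod,
    iteratedDeriv_one_sub_cpow a n (by norm_num : ‖(0:ℂ)‖ < 1)]
  simp [smul_eq_mul, Complex.one_cpow, Finset.prod_const, div_eq_mul_inv]
  ring

lemma hasSum_binomial_real {b x : ℝ} (hx0 : 0 ≤ x) (hx1 : x < 1) :
    HasSum (fun m : ℕ => (ascPochhammer ℝ m).eval b * x ^ m / (Nat.factorial m : ℝ))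
      ((1 - x) ^ (-b)) := by
  have h := hasSum_binomial (b : ℂ) (t := (x : ℂ)) (by rw [Complex.norm_real, Real.norm_eq_abs, _root_.abs_of_nonneg hx0]; exact hx1)
  have hcast : ∀ m : ℕ, (((ascPochhammer ℝ m).eval b * x ^ m / (Nat.factorial m : ℝ) : ℝ) : ℂ)
      = (ascPochhammer ℂ m).eval (b : ℂ) * (x : ℂ) ^ m / (Nat.factorial m : ℂ) := by
    intro m
    push_cast
    rw [← ascPochhammer_map (algebraMap ℝ ℂ) m, Polynomial.eval_map,
      show ((b : ℂ)) = algebraMap ℝ ℂ b from rfl, Polynomial.eval₂_hom]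
    norm_num
  have hval : ((( (1 - x) ^ (-b) : ℝ) : ℂ)) = ((1 : ℂ) - (x : ℂ)) ^ (-(b : ℂ)) := by
    rw [Complex.ofReal_cpow (by linarith)]
    push_cast
    ring_nf
  rw [← RCLike.hasSum_ofReal (𝕜 := ℂ)]
  show HasSum (fun m : ℕ => (((ascPochhammer ℝ m).eval b * x ^ m / (Nat.factorial m : ℝ) : ℝ) : ℂ))
      (((1 - x) ^ (-b) : ℝ) : ℂ)
  have : (fun m : ℕ => (((ascPochhammer ℝ m).eval b * x ^ m / (Nat.factorial m : ℝ) : ℝ) : ℂ))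
      = fun m : ℕ => (ascPochhammer ℂ m).eval (b : ℂ) * (x : ℂ) ^ m / (Nat.factorial m : ℂ) :=
    funext hcast
  exact this ▸ hval ▸ h

lemma poch_mul_eval (x : ℂ) (k m : ℕ) :
    (ascPochhammer ℂ (k + m)).eval x
      = (ascPochhammer ℂ k).eval x * (ascPochhammer ℂ m).eval (x + k) := by
  have h := congrArg (Polynomial.eval x) (ascPochhammer_mul ℂ k m)
  rw [Polynomial.eval_mul, Polynomial.eval_comp, Polynomial.eval_add, Polynomial.eval_X,
    Polynomial.eval_natCast] at h
  exact h.symm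

lemma my_Gamma_nat_add (x : ℂ) (hx : ∀ i : ℕ, x + (i : ℂ) ≠ 0) (n : ℕ) :
    Complex.Gamma ((n : ℂ) + x) = (ascPochhammer ℂ n).eval x * Complex.Gamma x := by
  induction n with
  | zero => simp
  | succ n ih =>
    have h1 : ((n + 1 : ℕ) : ℂ) + x = ((n : ℂ) + x) + 1 := by push_cast; ring
    have h2 : ((n : ℂ) + x) ≠ 0 := by
      intro h; exact hx n (by rw [← h]; ring)
    rw [h1, Complex.Gamma_add_one _ h2, ih, ascPochhammer_succ_eval]
    ring

lemma poch_eval_nonneg {d : ℝ} (hd : 0 ≤ d) (m : ℕ) : 0 ≤ (ascPochhammer ℝ m).eval d := by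
  induction m with
  | zero => simp
  | succ m ih =>
    rw [ascPochhammer_succ_eval]
    exact mul_nonneg ih (by positivity)

lemma poch_norm_le {c : ℂ} {d : ℝ} (hd : 0 ≤ d) (h : ‖c‖ ≤ d) (m : ℕ) :
    ‖(ascPochhammer ℂ m).eval c‖ ≤ (ascPochhammer ℝ m).eval d := by
  induction m with
  | zero => simp
  | succ m ih =>
    rw [ascPochhammer_succ_eval, ascPochhammer_succ_eval, norm_mul]
    have h1 : ‖c + m‖ ≤ d + m := by
      calc ‖c + m‖ ≤ ‖c‖ + ‖(m : ℂ)‖ := norm_add_le _ _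
        _ = ‖c‖ + m := by rw [Complex.norm_natCast]
        _ ≤ d + m := by linarith
    exact mul_le_mul ih h1 (norm_nonneg _) (poch_eval_nonneg hd m)

lemma poch_ne_zero {x : ℂ} (hx : ∀ i : ℕ, x + (i : ℂ) ≠ 0) (k : ℕ) :
    (ascPochhammer ℂ k).eval x ≠ 0 := by
  induction k with
  | zero => simp
  | succ k ih =>
    rw [ascPochhammer_succ_eval]
    exact mul_ne_zero ih (hx k)

lemma poch_neg_nat (n k : ℕ) :
    (ascPochhammer ℂ k).eval (-(n : ℂ)) = (-1) ^ k * (n.descFactorial k : ℂ) := by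
  rw [ascPochhammer_eval_neg_eq_descPochhammer, descPochhammer_eval_eq_descFactorial]

set_option maxHeartbeats 1000000 in
/-- generating function for the confluent hypergeometric polynomials
of the second kind. -/
theorem stmt5 (t : ℂ) (ht : ‖t‖ < 1) (γ : ℝ) (hγ : ∀ k : ℕ, 2 - γ ≠ -(k : ℝ)) (z : ℂ) :
    ∑' ψ₀ : ℕ, t ^ ψ₀ / (Nat.factorial ψ₀ : ℂ) *
      ((Complex.Gamma ((ψ₀ : ℂ) + 2 - γ) / Complex.Gamma (2 - (γ : ℂ))) *
        ∑ n ∈ Finset.range (ψ₀ + 1),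
          (ascPochhammer ℂ n).eval (-(ψ₀ : ℂ)) /
            ((Nat.factorial n : ℂ) * (ascPochhammer ℂ n).eval (2 - (γ : ℂ))) * z ^ n) =
    (1 - t) ^ ((γ : ℂ) - 2) * Complex.exp (-z * t / (1 - t)) := by
  classical
  set x : ℂ := 2 - (γ : ℂ) with hxdef
  have hxne : ∀ i : ℕ, x + (i : ℂ) ≠ 0 := by
    intro i h
    apply hγ i
    rw [hxdef] at h
    have h2 : ((2 - γ + i : ℝ) : ℂ) = 0 := by push_cast; linear_combination h
    have h3 := Complex.ofReal_eq_zero.mp h2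
    linarith
  have hGammane : Complex.Gamma x ≠ 0 := by
    apply Complex.Gamma_ne_zero
    intro m hm
    exact hxne m (by rw [hm]; ring)
  have ht1 : (1 : ℂ) - t ≠ 0 := by
    intro h
    have he : t = 1 := by linear_combination -h
    rw [he] at ht; simp at ht
  set b : ℝ := ‖x‖ with hbdef
  set τ : ℝ := ‖t‖ with hτdef
  have hτ0 : 0 ≤ τ := norm_nonneg t
  have hτ1 : τ < 1 := ht
  have h1τ : 0 < 1 - τ := by linarith
  set f : ℕ × ℕ → ℂ := fun p =>
    (-z) ^ p.1 / (Nat.factorial p.1 : ℂ) * t ^ (p.1 + p.2)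
      * ((ascPochhammer ℂ p.2).eval (x + p.1) / (Nat.factorial p.2 : ℂ)) with hfdef
  set g : ℕ × ℕ → ℝ := fun p =>
    ‖z‖ ^ p.1 * τ ^ p.1 / (Nat.factorial p.1)
      * ((ascPochhammer ℝ p.2).eval (b + p.1) * τ ^ p.2 / (Nat.factorial p.2)) with hgdef
  have hrow : ∀ k : ℕ, HasSum (fun m => g (k, m))
      (‖z‖ ^ k * τ ^ k / (Nat.factorial k) * ((1 - τ) ^ (-(b + k)) : ℝ)) := fun k =>
    (hasSum_binomial_real (b := b + k) hτ0 hτ1).mul_left _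
  have hgnonneg : ∀ p : ℕ × ℕ, 0 ≤ g p := by
    intro ⟨k, m⟩
    have := poch_eval_nonneg (d := b + k) (by positivity) m
    simp only [hgdef]
    positivity
  have hrowsum : ∀ k : ℕ, ∑' m, g (k, m)
      = (1 - τ) ^ (-b) * ((‖z‖ * τ / (1 - τ)) ^ k / (Nat.factorial k)) := by
    intro k
    rw [(hrow k).tsum_eq]
    have : ((1 - τ) ^ (-(b + (k : ℝ))) : ℝ) = (1 - τ) ^ (-b) * ((1 - τ) ^ k)⁻¹ := by
      rw [neg_add, Real.rpow_add h1τ, Real.rpow_neg (le_of_lt h1τ) b, Real.rpow_neg (le_of_lt h1τ) (k:ℝ), Real.rpow_natCast]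
    rw [this, div_pow, mul_pow]
    field_simp
  have hG : Summable g := by
    rw [summable_prod_of_nonneg hgnonneg]
    refine ⟨fun k => (hrow k).summable, ?_⟩
    apply Summable.congr (f := fun k : ℕ =>
      (1 - τ) ^ (-b) * ((‖z‖ * τ / (1 - τ)) ^ k / (Nat.factorial k)))
    · exact (Real.summable_pow_div_factorial _).mul_left _
    · intro k; exact (hrowsum k).symm
  have hfg : ∀ p : ℕ × ℕ, ‖f p‖ ≤ g p := by
    intro ⟨k, m⟩
    have hP : ‖(ascPochhammer ℂ m).eval (x + k)‖ ≤ (ascPochhammer ℝ m).eval (b + k) := by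
      refine poch_norm_le (by positivity) ?_ m
      calc ‖x + k‖ ≤ ‖x‖ + ‖(k : ℂ)‖ := norm_add_le _ _
        _ = b + k := by rw [Complex.norm_natCast]
    have heq : ‖f (k, m)‖ = ‖z‖ ^ k * τ ^ k / (Nat.factorial k)
        * (‖(ascPochhammer ℂ m).eval (x + k)‖ * τ ^ m / (Nat.factorial m)) := by
      simp only [hfdef, norm_mul, norm_div, norm_pow, norm_neg,
        Complex.norm_natCast, pow_add]
      ring
    rw [heq]
    refine mul_le_mul_of_nonneg_left ?_ (by positivity)
    refine (div_le_div_iff_of_pos_right (by positivity)).mpr ?_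
    exact mul_le_mul_of_nonneg_right hP (by positivity)
  have hfs : Summable f :=
    Summable.of_norm (Summable.of_nonneg_of_le (fun p => norm_nonneg _) hfg hG)
  have hinner : ∀ k : ℕ, HasSum (fun m => f (k, m))
      ((1 - t) ^ (-x) * ((-z * t / (1 - t)) ^ k / (Nat.factorial k))) := by
    intro k
    have h0 := (hasSum_binomial (x + k) ht).mul_left ((-z) ^ k / (Nat.factorial k : ℂ) * t ^ k)
    have hval : (-z) ^ k / (Nat.factorial k : ℂ) * t ^ k * (1 - t) ^ (-(x + (k : ℂ)))
        = (1 - t) ^ (-x) * ((-z * t / (1 - t)) ^ k / (Nat.factorial k : ℂ)) := by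
      rw [neg_add, Complex.cpow_add _ _ ht1,
        show ((1 - t) ^ (-(k : ℂ)) : ℂ) = ((1 - t) ^ k)⁻¹ by
          rw [Complex.cpow_neg, Complex.cpow_natCast], div_pow, mul_pow]
      have hpw : (1 - t) ^ k ≠ 0 := pow_ne_zero _ ht1
      have hkf : (Nat.factorial k : ℂ) ≠ 0 := Nat.cast_ne_zero.mpr k.factorial_ne_zero
      field_simp
    rw [← hval]
    convert h0 using 1
    · rfl
    funext m
    simp only [hfdef, pow_add]
    ring
  have houter : HasSum (fun k => (1 - t) ^ (-x) * ((-z * t / (1 - t)) ^ k / (Nat.factorial k)))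
      ((1 - t) ^ (-x) * Complex.exp (-z * t / (1 - t))) := by
    have h0 := (NormedSpace.expSeries_div_hasSum_exp (-z * t / (1 - t))).mul_left
      ((1 - t) ^ (-x))
    rwa [← congrFun Complex.exp_eq_exp_ℂ (-z * t / (1 - t))] at h0
  have hdouble : ∑' p, f p = (1 - t) ^ (-x) * Complex.exp (-z * t / (1 - t)) := by
    rw [Summable.tsum_prod' hfs fun k => (hinner k).summable]
    calc ∑' k, ∑' m, f (k, m)
        = ∑' k, (1 - t) ^ (-x) * ((-z * t / (1 - t)) ^ k / (Nat.factorial k)) :=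
          tsum_congr fun k => (hinner k).tsum_eq
      _ = _ := houter.tsum_eq
  have hterm : ∀ n : ℕ, t ^ n / (Nat.factorial n : ℂ) *
      ((Complex.Gamma ((n : ℂ) + 2 - γ) / Complex.Gamma (2 - (γ : ℂ))) *
        ∑ k ∈ Finset.range (n + 1),
          (ascPochhammer ℂ k).eval (-(n : ℂ)) /
            ((Nat.factorial k : ℂ) * (ascPochhammer ℂ k).eval (2 - (γ : ℂ))) * z ^ k)
      = ∑ p ∈ Finset.HasAntidiagonal.antidiagonal n, f p := by
    intro n
    have hGeq : ((n : ℂ) + 2 - ↑γ) = (n : ℂ) + x := by rw [hxdef]; ring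
    have hG2 : Complex.Gamma ((n : ℂ) + 2 - ↑γ) / Complex.Gamma (2 - (γ : ℂ))
        = (ascPochhammer ℂ n).eval x := by
      rw [hGeq, my_Gamma_nat_add x hxne n, ← hxdef, mul_div_assoc, div_self hGammane, mul_one]
    rw [hG2, Finset.Nat.sum_antidiagonal_eq_sum_range_succ_mk, Finset.mul_sum, Finset.mul_sum]
    refine Finset.sum_congr rfl fun k hk => ?_
    have hkn : k ≤ n := Nat.lt_succ_iff.mp (Finset.mem_range.mp hk)
    have hsplit : (ascPochhammer ℂ n).eval x
        = (ascPochhammer ℂ k).eval x * (ascPochhammer ℂ (n - k)).eval (x + k) := by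
      rw [← poch_mul_eval, Nat.add_sub_cancel' hkn]
    have hfv : f (k, n - k) = (-z) ^ k / (Nat.factorial k : ℂ) * t ^ n
        * ((ascPochhammer ℂ (n - k)).eval (x + k) / (Nat.factorial (n - k) : ℂ)) := by
      simp only [hfdef]
      rw [Nat.add_sub_cancel' hkn]
    have hneg := poch_neg_nat n k
    have hnf : (Nat.factorial n : ℂ) ≠ 0 := Nat.cast_ne_zero.mpr n.factorial_ne_zero
    have hkf : (Nat.factorial k : ℂ) ≠ 0 := Nat.cast_ne_zero.mpr k.factorial_ne_zero
    have hnkf : (Nat.factorial (n - k) : ℂ) ≠ 0 := Nat.cast_ne_zero.mpr (n - k).factorial_ne_zero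
    have hpk := poch_ne_zero hxne k
    have hfact : ((n - k).factorial : ℂ) * (n.descFactorial k : ℂ) = (n.factorial : ℂ) := by
      exact_mod_cast congrArg (Nat.cast : ℕ → ℂ) (Nat.factorial_mul_descFactorial hkn)
    have hdesc : ((n.descFactorial k : ℕ) : ℂ)
        = (Nat.factorial n : ℂ) / (Nat.factorial (n - k) : ℂ) := by
      rw [eq_div_iff hnkf]; linear_combination hfact
    rw [hfv, hneg, hsplit, hdesc, neg_pow z k, ← hxdef]
    field_simp
  rw [tsum_congr hterm]
  have hsig : ∑' p : ℕ × ℕ, f p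
      = ∑' n : ℕ, ∑ p ∈ Finset.HasAntidiagonal.antidiagonal n, f p := by
    set e := Finset.HasAntidiagonal.sigmaAntidiagonalEquivProd (A := ℕ) with hedef
    have hcomp : HasSum (f ∘ e) (∑' p : ℕ × ℕ, f p) := e.hasSum_iff.mpr hfs.hasSum
    have hfib : ∀ n : ℕ, HasSum (fun p : Finset.HasAntidiagonal.antidiagonal n => (f ∘ e) ⟨n, p⟩)
        (∑ p ∈ Finset.HasAntidiagonal.antidiagonal n, f p) := fun n => Finset.hasSum _ _
    exact (hcomp.sigma hfib).tsum_eq.symm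
  have hexp : (-x) = (γ : ℂ) - 2 := by rw [hxdef]; ring
  rw [← hsig, hdouble, hexp]
end

section
/- For a nonnegative integer β₀ (so that a = -β₀ makes 1-a = 1+β₀ a positive integer), b > 0, and complex z, the representation M(-β₀, b, z) = (1/(2πi)) · (Γ(1+β₀)Γ(b)/Γ(b+β₀)) ∮ e^{-zv/(1-v)} v^{-β₀-1} (1-v)^{-b} dv holds, where the contour is a small positively oriented circle around 0 of radius less than 1. -/
open Complex Metric MeasureTheory

lemma aux_open : IsOpen {v : ℂ | 1 - v ∈ Complex.slitPlane} :=
  Complex.isOpen_slitPlane.preimage (by continuity)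

lemma aux_iteratedDeriv (c : ℂ) (m : ℕ) :
    ∀ v : ℂ, 1 - v ∈ Complex.slitPlane →
      iteratedDeriv m (fun u : ℂ => (1 - u) ^ (-c)) v
        = (ascPochhammer ℂ m).eval c * (1 - v) ^ (-c - m) := by
  induction m with
  | zero => intro v hv; simp [iteratedDeriv_zero]
  | succ m ih =>
    intro v hv
    rw [iteratedDeriv_succ]
    have hev : iteratedDeriv m (fun u : ℂ => (1 - u) ^ (-c))
        =ᶠ[nhds v] fun u => (ascPochhammer ℂ m).eval c * (1 - u) ^ (-c - m) := by
      filter_upwards [aux_open.mem_nhds hv] with u hu using ih u hu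
    rw [hev.deriv_eq]
    have h1 : HasDerivAt (fun u : ℂ => 1 - u) (-1) v := by
      simpa using (hasDerivAt_id v).const_sub 1
    have h2 : HasDerivAt (fun u : ℂ => (1 - u) ^ (-c - m))
        ((-c - m) * (1 - v) ^ (-c - m - 1) * (-1)) v := h1.cpow_const hv
    have h3 := (h2.const_mul ((ascPochhammer ℂ m).eval c)).deriv
    rw [h3, ascPochhammer_succ_eval]
    push_cast
    ring_nf

lemma two_pi_I_ne : (2 * (Real.pi:ℂ) * Complex.I) ≠ 0 := by
  simp [Real.pi_ne_zero, Complex.I_ne_zero]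

lemma aux_coeff {r : ℝ} (hr0 : 0 < r) (f : ℂ → ℂ)
    (hd : DifferentiableOn ℂ f (closedBall (0:ℂ) r)) (m : ℕ) :
    (∮ v in C(0, r), v ^ (-(m:ℤ) - 1) * f v)
      = (2 * Real.pi * Complex.I) * ((m.factorial : ℂ))⁻¹ * iteratedDeriv m f 0 := by
  lift r to NNReal using hr0.le with R
  have hR : 0 < R := by exact_mod_cast hr0
  have h : HasFPowerSeriesOnBall f (cauchyPowerSeries f 0 R) 0 R :=
    hd.hasFPowerSeriesOnBall hR
  have hfs := h.factorial_smul (1 : ℂ) m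
  rw [← iteratedDeriv_eq_iteratedFDeriv] at hfs
  have happ := cauchyPowerSeries_apply f 0 R m 1
  have hcongr : (∮ v in C(0, (R:ℝ)), v ^ (-(m:ℤ) - 1) * f v)
      = ∮ z in C(0, (R:ℝ)), (1 / (z - 0)) ^ m • (z - 0)⁻¹ • f z := by
    refine circleIntegral.integral_congr hr0.le fun v hv => ?_
    have hv0 : v ≠ 0 := by
      simp only [mem_sphere_iff_norm, sub_zero] at hv
      intro h0; rw [h0] at hv; simp at hv; exact hr0.ne' hv.symm
    simp only [sub_zero, smul_eq_mul, one_div]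
    rw [zpow_sub₀ hv0, zpow_neg, zpow_natCast, zpow_one, inv_pow]
    ring
  rw [hcongr, ← hfs, happ, nsmul_eq_mul, smul_eq_mul]
  have hm : (m.factorial : ℂ) ≠ 0 := by exact_mod_cast m.factorial_ne_zero
  generalize (∮ z in C(0,(R:ℝ)), (1 / (z - 0)) ^ m • (z - 0)⁻¹ • f z) = J
  calc J = ((2 * (Real.pi:ℂ) * Complex.I) * (2 * (Real.pi:ℂ) * Complex.I)⁻¹)
        * (((m.factorial:ℂ))⁻¹ * (m.factorial:ℂ)) * J := by
        rw [mul_inv_cancel₀ two_pi_I_ne, inv_mul_cancel₀ hm]; ring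
    _ = 2 * (Real.pi:ℂ) * Complex.I * ((m.factorial:ℂ))⁻¹
        * ((m.factorial:ℂ) * ((2 * (Real.pi:ℂ) * Complex.I)⁻¹ * J)) := by ring

lemma aux_slit {r : ℝ} (hr1 : r < 1) {v : ℂ} (hv : v ∈ closedBall (0:ℂ) r) :
    1 - v ∈ Complex.slitPlane := by
  left
  simp only [Complex.sub_re, Complex.one_re]
  have : v.re ≤ ‖v‖ := Complex.re_le_norm v
  simp only [mem_closedBall, Complex.dist_eq, sub_zero] at hv
  linarith

lemma aux_diff {r : ℝ} (hr1 : r < 1) (c : ℂ) :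
    DifferentiableOn ℂ (fun u : ℂ => (1 - u) ^ (-c)) (closedBall (0:ℂ) r) := by
  intro v hv
  exact (((hasDerivAt_id v).const_sub 1).cpow_const (aux_slit hr1 hv)).differentiableAt.differentiableWithinAt

-- J_n for n ≤ β₀
lemma aux_J_le {r : ℝ} (hr0 : 0 < r) (hr1 : r < 1) (β₀ n : ℕ) (hn : n ≤ β₀) (b : ℝ) :
    (∮ v in C(0, r), v ^ ((n:ℤ) - β₀ - 1) * (1 - v) ^ (-((b:ℂ) + n)))
      = (2 * Real.pi * Complex.I) * (((β₀ - n).factorial : ℂ))⁻¹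
        * (ascPochhammer ℂ (β₀ - n)).eval ((b:ℂ) + n) := by
  have hcast : (n:ℤ) - β₀ - 1 = -((β₀ - n : ℕ) : ℤ) - 1 := by
    push_cast [hn]; ring
  rw [hcast, aux_coeff hr0 _ (aux_diff hr1 ((b:ℂ) + n)) (β₀ - n),
    aux_iteratedDeriv ((b:ℂ)+n) (β₀ - n) 0 (by simpa using Complex.one_mem_slitPlane)]
  simp [Complex.one_cpow]

-- J_n = 0 for n > β₀
lemma aux_J_gt {r : ℝ} (hr0 : 0 < r) (hr1 : r < 1) (β₀ n : ℕ) (hn : β₀ < n) (b : ℝ) :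
    (∮ v in C(0, r), v ^ ((n:ℤ) - β₀ - 1) * (1 - v) ^ (-((b:ℂ) + n))) = 0 := by
  have hcast : (n:ℤ) - β₀ - 1 = ((n - β₀ - 1 : ℕ) : ℤ) := by omega
  have hd : DifferentiableOn ℂ (fun v : ℂ => v ^ (n - β₀ - 1 : ℕ) * (1 - v) ^ (-((b:ℂ) + n)))
      (closedBall (0:ℂ) r) :=
    (differentiable_pow _).differentiableOn.mul (aux_diff hr1 _)
  have h0 : (∮ v in C(0, r), v ^ (n - β₀ - 1 : ℕ) * (1 - v) ^ (-((b:ℂ) + n))) = 0 :=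
    circleIntegral_eq_zero_of_differentiable_on_off_countable hr0.le Set.countable_empty
      hd.continuousOn (fun v hv => hd.differentiableAt
        (Filter.mem_of_superset (isOpen_ball.mem_nhds hv.1) ball_subset_closedBall))
  refine Eq.trans ?_ h0
  refine circleIntegral.integral_congr
    (f := fun v : ℂ => v ^ ((n:ℤ) - β₀ - 1) * (1 - v) ^ (-((b:ℂ) + n)))
    (g := fun v : ℂ => v ^ (n - β₀ - 1 : ℕ) * (1 - v) ^ (-((b:ℂ) + n)))
    hr0.le fun v hv => ?_
  simp only []
  rw [hcast, zpow_natCast]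

lemma aux_pointwise (β₀ : ℕ) (b : ℝ) (z : ℂ) {v : ℂ} (hv0 : v ≠ 0) (hv1 : (1:ℂ) - v ≠ 0) :
    Complex.exp (-z * v / (1 - v)) * v ^ (-(β₀:ℤ) - 1) * (1 - v) ^ (-(b:ℂ))
      = ∑' n : ℕ, ((-z)^n / n.factorial) * (v ^ ((n:ℤ) - β₀ - 1) * (1 - v) ^ (-((b:ℂ) + n))) := by
  rw [show Complex.exp (-z * v / (1 - v)) = ∑' n : ℕ, (-z * v / (1-v)) ^ n / n.factorial by
    rw [Complex.exp_eq_exp_ℂ, NormedSpace.exp_eq_tsum_div], mul_assoc, ← tsum_mul_right]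
  congr 1; funext n
  have hpow : ((1:ℂ) - v) ^ n ≠ 0 := pow_ne_zero _ hv1
  have h1 : ((1:ℂ) - v) ^ (-((b:ℂ) + n)) = (1 - v) ^ (-(b:ℂ)) / (1 - v) ^ n := by
    rw [neg_add, Complex.cpow_add _ _ hv1, Complex.cpow_neg ((1:ℂ)-v) (n:ℂ),
      Complex.cpow_natCast, div_eq_mul_inv]
  have h2 : v ^ ((n:ℤ) - β₀ - 1) = v ^ n * v ^ (-(β₀:ℤ) - 1) := by
    rw [show (n:ℤ) - β₀ - 1 = (n:ℤ) + (-(β₀:ℤ) - 1) by ring, zpow_add₀ hv0, zpow_natCast]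
  rw [h1, h2, div_pow, mul_pow]
  field_simp


lemma aux_interchange {r : ℝ} (hr0 : 0 < r) (hr1 : r < 1) (β₀ : ℕ) (b : ℝ) (hb : 0 < b) (z : ℂ) :
    (∮ v in C(0, r), Complex.exp (-z * v / (1 - v)) * v ^ (-(β₀ : ℤ) - 1) * (1 - v) ^ (-(b : ℂ)))
      = ∑' n : ℕ, ((-z)^n / n.factorial) *
          ∮ v in C(0, r), v ^ ((n:ℤ) - β₀ - 1) * (1 - v) ^ (-((b:ℂ) + n)) := by
  set g : ℕ → ℂ → ℂ := fun n v => ((-z)^n / n.factorial) *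
    (v ^ ((n:ℤ) - β₀ - 1) * (1 - v) ^ (-((b:ℂ) + n))) with hg
  -- facts about circleMap
  have habs : ∀ θ : ℝ, ‖circleMap 0 r θ‖ = r := by
    intro θ; rw [norm_circleMap_zero, abs_of_pos hr0]
  have hw0 : ∀ θ : ℝ, circleMap 0 r θ ≠ 0 := fun θ => circleMap_ne_center hr0.ne'
  have h1w : ∀ θ : ℝ, (1:ℂ) - circleMap 0 r θ ≠ 0 := by
    intro θ h
    have hw1 : circleMap 0 r θ = 1 := by linear_combination -h
    have h2 := habs θ
    rw [hw1] at h2; simp at h2; linarith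
  have h1wabs : ∀ θ : ℝ, 1 - r ≤ ‖1 - circleMap 0 r θ‖ := by
    intro θ
    have h := norm_sub_norm_le (1:ℂ) (circleMap 0 r θ)
    simp only [habs θ, norm_one] at h
    exact h
  -- continuity
  have hcont : ∀ n : ℕ, Continuous (fun θ : ℝ =>
      deriv (circleMap 0 r) θ • g n (circleMap 0 r θ)) := by
    intro n
    have hW : Continuous (circleMap 0 r) := continuous_circleMap 0 r
    have hder : Continuous (fun θ : ℝ => deriv (circleMap 0 r) θ) := by
      simp only [deriv_circleMap]; exact (continuous_circleMap 0 r).mul continuous_const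
    have hzpow : Continuous (fun θ : ℝ => (circleMap 0 r θ) ^ ((n:ℤ) - β₀ - 1)) :=
      hW.zpow₀ _ (fun θ => Or.inl (hw0 θ))
    have hslit : ∀ θ : ℝ, (1:ℂ) - circleMap 0 r θ ∈ Complex.slitPlane := by
      intro θ
      left
      have h1 : (circleMap 0 r θ).re ≤ ‖circleMap 0 r θ‖ :=
        Complex.re_le_norm _
      rw [habs θ] at h1
      simp only [Complex.sub_re, Complex.one_re]
      linarith
    have hcpow : Continuous (fun θ : ℝ => ((1:ℂ) - circleMap 0 r θ) ^ (-((b:ℂ) + n))) :=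
      (continuous_const.sub hW).cpow continuous_const hslit
    exact hder.smul (continuous_const.mul (hzpow.mul hcpow))
  -- the bound
  set C : ℕ → ℝ := fun n => (r * (r ^ (-(β₀:ℤ)-1) * (1-r) ^ (-b))) *
    ((‖z‖ * r / (1-r)) ^ n / n.factorial) with hC
  have h1r : (0:ℝ) < 1 - r := by linarith
  have hC0 : ∀ n, 0 ≤ C n := by
    intro n
    apply mul_nonneg (mul_nonneg hr0.le (mul_nonneg (zpow_nonneg hr0.le _) (Real.rpow_nonneg h1r.le _)))
    positivity
  have hCsum : Summable C := (Real.summable_pow_div_factorial _).mul_left _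
  have hbound : ∀ n θ, ‖deriv (circleMap 0 r) θ • g n (circleMap 0 r θ)‖ ≤ C n := by
    intro n θ
    set w := circleMap 0 r θ with hwdef
    have hnd : ‖deriv (circleMap 0 r) θ‖ = r := by
      rw [deriv_circleMap]
      simp [abs_of_pos hr0]
    rw [norm_smul, hnd, hg]
    simp only [norm_mul, norm_div, norm_pow, norm_neg]
    have e1 : ‖w ^ ((n:ℤ) - β₀ - 1)‖ = r ^ (n:ℤ) * r ^ (-(β₀:ℤ) - 1) := by
      rw [Complex.norm_zpow, habs θ,
        show (n:ℤ) - β₀ - 1 = (n:ℤ) + (-(β₀:ℤ) - 1) by ring, zpow_add₀ hr0.ne']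
    have e2 : ‖((1:ℂ) - w) ^ (-((b:ℂ) + n))‖ ≤ (1-r) ^ (-b) * ((1-r)⁻¹) ^ n := by
      calc ‖((1:ℂ) - w) ^ (-((b:ℂ) + n))‖
          ≤ ‖1 - w‖ ^ (-((b:ℂ)+(n:ℂ))).re / Real.exp (Complex.arg (1 - w) * (-((b:ℂ)+(n:ℂ))).im) :=
            Complex.norm_cpow_le _ _
        _ = ‖1 - w‖ ^ (-(b + n) : ℝ) := by
            norm_num
        _ ≤ (1 - r) ^ (-(b+n) : ℝ) := by
            apply Real.rpow_le_rpow_of_nonpos h1r (h1wabs θ)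
            have : (0:ℝ) ≤ (n:ℝ) := n.cast_nonneg
            linarith
        _ = (1-r) ^ (-b) * ((1-r)⁻¹) ^ n := by
            rw [show (-(b+n) : ℝ) = -b + -(n:ℝ) by ring, Real.rpow_add h1r]
            congr 1
            rw [Real.rpow_neg h1r.le, Real.rpow_natCast, inv_pow]
    calc r * (‖(z:ℂ)‖ ^ n / ‖(n.factorial:ℂ)‖ * (‖w ^ ((n:ℤ) - β₀ - 1)‖ * ‖((1:ℂ) - w) ^ (-((b:ℂ) + n))‖))
        ≤ r * (‖(z:ℂ)‖ ^ n / ‖(n.factorial:ℂ)‖ * ((r ^ (n:ℤ) * r ^ (-(β₀:ℤ) - 1)) * ((1-r) ^ (-b) * ((1-r)⁻¹) ^ n))) := by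
          rw [e1]
          apply mul_le_mul_of_nonneg_left _ hr0.le
          apply mul_le_mul_of_nonneg_left _ (by positivity)
          exact mul_le_mul_of_nonneg_left e2 (by positivity)
      _ = C n := by
          simp only [hC, Complex.norm_natCast]
          rw [div_pow, mul_pow, zpow_natCast, inv_pow]
          have hfact : (0:ℝ) < n.factorial := by exact_mod_cast n.factorial_pos
          field_simp
  -- step 1: replace integrand by tsum on the circle
  have hstep1 : (∮ v in C(0, r),
        Complex.exp (-z * v / (1 - v)) * v ^ (-(β₀:ℤ) - 1) * (1 - v) ^ (-(b:ℂ)))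
      = ∮ v in C(0, r), ∑' n : ℕ, g n v := by
    refine circleIntegral.integral_congr
      (f := fun v : ℂ => Complex.exp (-z * v / (1 - v)) * v ^ (-(β₀:ℤ) - 1) * (1 - v) ^ (-(b:ℂ)))
      (g := fun v : ℂ => ∑' n : ℕ, g n v) hr0.le fun v hv => ?_
    simp only [mem_sphere_iff_norm, sub_zero] at hv
    have hv0 : v ≠ 0 := by
      intro h; rw [h] at hv; simp at hv; linarith
    have hv1 : (1:ℂ) - v ≠ 0 := by
      intro h
      have : v = 1 := by linear_combination -h
      rw [this] at hv; simp at hv; linarith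
    exact aux_pointwise β₀ b z hv0 hv1
  rw [hstep1]
  have hmeas : ∀ n : ℕ, AEStronglyMeasurable
      (fun θ : ℝ => deriv (circleMap 0 r) θ • g n (circleMap 0 r θ))
      (MeasureTheory.volume.restrict (Set.Ioc (0:ℝ) (2*Real.pi))) :=
    fun n => ((hcont n).aestronglyMeasurable).restrict
  have hne : (∑' n : ℕ, ∫⁻ θ in Set.Ioc (0:ℝ) (2*Real.pi),
      ‖deriv (circleMap 0 r) θ • g n (circleMap 0 r θ)‖₊) ≠ ⊤ := by
    refine ne_top_of_le_ne_top (b := ∑' n : ℕ, ENNReal.ofReal (C n) * ENNReal.ofReal (2*Real.pi)) ?_ ?_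
    · rw [ENNReal.tsum_mul_right, ← ENNReal.ofReal_tsum_of_nonneg hC0 hCsum]
      exact ENNReal.mul_ne_top ENNReal.ofReal_ne_top ENNReal.ofReal_ne_top
    · refine ENNReal.tsum_le_tsum fun n => ?_
      have h1 : (∫⁻ θ in Set.Ioc (0:ℝ) (2*Real.pi),
          ‖deriv (circleMap 0 r) θ • g n (circleMap 0 r θ)‖₊)
          ≤ ∫⁻ _ in Set.Ioc (0:ℝ) (2*Real.pi), ENNReal.ofReal (C n) := by
        refine lintegral_mono fun θ => ?_
        rw [← enorm_eq_nnnorm, ← ofReal_norm]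
        exact ENNReal.ofReal_le_ofReal (hbound n θ)
      refine h1.trans ?_
      rw [MeasureTheory.lintegral_const, Measure.restrict_apply MeasurableSet.univ,
        Set.univ_inter, Real.volume_Ioc, sub_zero]
  have hswap := MeasureTheory.integral_tsum hmeas hne
  have hper : ∀ n : ℕ, (∫ θ in Set.Ioc (0:ℝ) (2*Real.pi),
      deriv (circleMap 0 r) θ • g n (circleMap 0 r θ))
      = ((-z)^n / n.factorial) *
          ∮ v in C(0, r), v ^ ((n:ℤ) - β₀ - 1) * (1 - v) ^ (-((b:ℂ) + n)) := by
    intro n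
    rw [← intervalIntegral.integral_of_le Real.two_pi_pos.le]
    simp only [circleIntegral, smul_eq_mul, hg]
    rw [← intervalIntegral.integral_const_mul]
    congr 1; funext θ; ring
  calc (∮ v in C(0, r), ∑' n : ℕ, g n v)
      = ∫ θ in Set.Ioc (0:ℝ) (2*Real.pi), ∑' n : ℕ,
          deriv (circleMap 0 r) θ • g n (circleMap 0 r θ) := by
        simp only [circleIntegral, smul_eq_mul]
        rw [intervalIntegral.integral_of_le Real.two_pi_pos.le]
        congr 1; funext θ
        exact (tsum_mul_left).symm
    _ = ∑' n : ℕ, ∫ θ in Set.Ioc (0:ℝ) (2*Real.pi),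
          deriv (circleMap 0 r) θ • g n (circleMap 0 r θ) := hswap
    _ = ∑' n : ℕ, ((-z)^n / n.factorial) *
          ∮ v in C(0, r), v ^ ((n:ℤ) - β₀ - 1) * (1 - v) ^ (-((b:ℂ) + n)) := by
        congr 1; funext n; exact hper n

-- eval of ascPochhammer at -β₀ vanishes for n > β₀
lemma aux_asc_zero (β₀ n : ℕ) (hn : β₀ < n) :
    (ascPochhammer ℂ n).eval (-(β₀ : ℂ)) = 0 := by
  induction n with
  | zero => omega
  | succ m ih =>
    rw [ascPochhammer_succ_eval]
    rcases Nat.lt_or_ge β₀ m with h | h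
    · rw [ih h, zero_mul]
    · have : β₀ = m := by omega
      subst this
      simp

lemma aux_asc_neg (β₀ : ℕ) : ∀ n ≤ β₀,
    (ascPochhammer ℂ n).eval (-(β₀ : ℂ)) * ((β₀ - n).factorial : ℂ)
      = (-1)^n * (β₀.factorial : ℂ) := by
  intro n hn
  induction n with
  | zero => simp
  | succ m ih =>
    have hm : m ≤ β₀ := by omega
    have ihm := ih hm
    rw [ascPochhammer_succ_eval]
    have h1 : (-(β₀:ℂ) + m) = -(((β₀ - m : ℕ) : ℂ)) := by
      have : (β₀ - m : ℕ) = β₀ - m := rfl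
      push_cast [hm]
      ring
    have h2 : ((β₀ - m).factorial : ℂ) = ((β₀ - m : ℕ) : ℂ) * ((β₀ - (m+1)).factorial : ℂ) := by
      have : β₀ - m = (β₀ - (m+1)) + 1 := by omega
      rw [this, Nat.factorial_succ, show β₀ - (m+1) + 1 = β₀ - m by omega]
      push_cast
      ring
    calc (ascPochhammer ℂ m).eval (-(β₀:ℂ)) * (-(β₀:ℂ) + m) * ((β₀ - (m+1)).factorial : ℂ)
        = -((ascPochhammer ℂ m).eval (-(β₀:ℂ)) * (((β₀ - m : ℕ) : ℂ) * ((β₀ - (m+1)).factorial : ℂ))) := by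
          rw [h1]; ring
      _ = -((ascPochhammer ℂ m).eval (-(β₀:ℂ)) * ((β₀ - m).factorial : ℂ)) := by rw [← h2]
      _ = (-1)^(m+1) * (β₀.factorial : ℂ) := by rw [ihm]; ring

-- positivity-based nonvanishing
lemma aux_asc_pos (b : ℝ) (hb : 0 < b) (n : ℕ) :
    (ascPochhammer ℂ n).eval ((b:ℂ)) ≠ 0 := by
  induction n with
  | zero => simp
  | succ m ih =>
    rw [ascPochhammer_succ_eval]
    refine mul_ne_zero ih ?_
    intro h
    have : ((b:ℂ) + m).re = 0 := by rw [h]; simp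
    simp only [Complex.add_re, Complex.ofReal_re, Complex.natCast_re] at this
    have : (0:ℝ) ≤ m := Nat.cast_nonneg m
    linarith [Complex.add_re (b:ℂ) (m:ℂ)]

-- splitting
lemma aux_asc_split (β₀ n : ℕ) (hn : n ≤ β₀) (b : ℂ) :
    (ascPochhammer ℂ n).eval b * (ascPochhammer ℂ (β₀ - n)).eval (b + n)
      = (ascPochhammer ℂ β₀).eval b := by
  have h := ascPochhammer_mul ℂ n (β₀ - n)
  have h2 := congrArg (Polynomial.eval b) h
  rw [Polynomial.eval_mul, Polynomial.eval_comp] at h2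
  simp only [Polynomial.eval_add, Polynomial.eval_X, Polynomial.eval_natCast] at h2
  rw [show n + (β₀ - n) = β₀ by omega] at h2
  exact h2

-- Gamma shift
lemma aux_gamma_shift (b : ℝ) (hb : 0 < b) (k : ℕ) :
    Complex.Gamma ((b:ℂ) + k) = (ascPochhammer ℂ k).eval (b:ℂ) * Complex.Gamma (b:ℂ) := by
  induction k with
  | zero => simp
  | succ m ih =>
    have hne : (b:ℂ) + m ≠ 0 := by
      intro h
      have : ((b:ℂ) + m).re = 0 := by rw [h]; simp
      simp only [Complex.add_re, Complex.ofReal_re, Complex.natCast_re] at this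
      have : (0:ℝ) ≤ m := Nat.cast_nonneg m
      linarith [this]
    have : ((b:ℂ) + (m+1:ℕ)) = ((b:ℂ) + m) + 1 := by push_cast; ring
    rw [this, Complex.Gamma_add_one _ hne, ih, ascPochhammer_succ_eval]
    ring

lemma aux_gamma_ne (b : ℝ) (hb : 0 < b) : Complex.Gamma (b:ℂ) ≠ 0 := by
  apply Complex.Gamma_ne_zero
  intro m h
  have : ((b:ℂ)).re = (-(m:ℂ)).re := by rw [h]
  simp at this
  have : (0:ℝ) ≤ m := Nat.cast_nonneg m
  nlinarith [Complex.ofReal_re b]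


/-- contour integral representation of the terminating Kummer
polynomial M(-β₀, b, z). -/
theorem stmt8 (β₀ : ℕ) (b : ℝ) (hb : 0 < b) (z : ℂ) (r : ℝ) (hr0 : 0 < r) (hr1 : r < 1) :
    ∑' n : ℕ, (ascPochhammer ℂ n).eval (-(β₀ : ℂ)) /
        ((ascPochhammer ℂ n).eval (b : ℂ) * (Nat.factorial n : ℂ)) * z ^ n =
    (1 / (2 * Real.pi * Complex.I)) *
      (Complex.Gamma (1 + (β₀ : ℂ)) * Complex.Gamma (b : ℂ) /
        Complex.Gamma ((b : ℂ) + (β₀ : ℂ))) *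
      ∮ v in C(0, r),
        Complex.exp (-z * v / (1 - v)) * v ^ (-(β₀ : ℤ) - 1) * (1 - v) ^ (-(b : ℂ)) := by
  rw [aux_interchange hr0 hr1 β₀ b hb z]
  -- both sides to finite sums
  rw [tsum_eq_sum (s := Finset.range (β₀+1)) (by
    intro n hn
    rw [aux_asc_zero β₀ n (by simpa using hn)]
    simp)]
  rw [tsum_eq_sum (s := Finset.range (β₀+1)) (by
    intro n hn
    rw [aux_J_gt hr0 hr1 β₀ n (by simpa using hn) b]
    simp)]
  rw [Finset.mul_sum]
  refine Finset.sum_congr rfl fun n hn => ?_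
  have hnle : n ≤ β₀ := by simpa [Nat.lt_succ_iff] using hn
  rw [aux_J_le hr0 hr1 β₀ n hnle b]
  have hG1 : Complex.Gamma (1 + (β₀:ℂ)) = (β₀.factorial : ℂ) := by
    rw [add_comm]; exact_mod_cast Complex.Gamma_nat_eq_factorial β₀
  have hG2 := aux_gamma_shift b hb β₀
  have hΓ := aux_gamma_ne b hb
  have h2pi := two_pi_I_ne
  have hfn : (n.factorial : ℂ) ≠ 0 := by exact_mod_cast n.factorial_ne_zero
  have hfm : ((β₀-n).factorial : ℂ) ≠ 0 := by exact_mod_cast (β₀-n).factorial_ne_zero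
  have hB := aux_asc_pos b hb n
  have hPβ := aux_asc_pos b hb β₀
  have hP2 : (ascPochhammer ℂ (β₀-n)).eval ((b:ℂ)+n)
      = (ascPochhammer ℂ β₀).eval (b:ℂ) / (ascPochhammer ℂ n).eval (b:ℂ) := by
    field_simp
    linear_combination aux_asc_split β₀ n hnle (b:ℂ)
  have hA : (ascPochhammer ℂ n).eval (-(β₀:ℂ))
      = (-1)^n * (β₀.factorial : ℂ) / (((β₀-n).factorial : ℕ) : ℂ) := by
    field_simp
    linear_combination aux_asc_neg β₀ n hnle
  rw [hG1, hG2, hP2, hA]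
  field_simp
  ring
end

section
/- Let i₀ ≥ 0 and β ≥ i₀ be integers, λ, γ real with 1 + λ/2 > 0 and γ + λ/2 > 0, and z complex. Then Σ_{i=i₀}^{β} [(-β)_i (1+λ/2)_{i₀} (γ+λ/2)_{i₀}] / [(-β)_{i₀} (1+λ/2)_i (γ+λ/2)_i] · z^i = z^{i₀} Σ_{l=0}^{β-i₀} [(i₀+λ/2)(i₀-1+γ+λ/2) B(i₀+λ/2, l+1) B(i₀-1+γ+λ/2, l+1) (-(β-i₀))_l / ((1)_l l!)] z^l, where B denotes the Beta function. -/
/-- Euler Beta function `B(x,y) = Γ(x)Γ(y)/Γ(x+y)`. -/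
noncomputable def eulerBeta (x y : ℝ) : ℝ := Real.Gamma x * Real.Gamma y / Real.Gamma (x + y)

lemma asc_add_eval {R : Type*} [CommSemiring R] (n m : ℕ) (x : R) :
    (ascPochhammer R (n + m)).eval x =
      (ascPochhammer R n).eval x * (ascPochhammer R m).eval (x + n) := by
  rw [← ascPochhammer_mul, Polynomial.eval_mul, Polynomial.eval_comp]
  simp

lemma asc_eval_real_cast (n : ℕ) (x : ℝ) :
    (ascPochhammer ℂ n).eval (Complex.ofReal x) = Complex.ofReal ((ascPochhammer ℝ n).eval x) := by
  rw [← ascPochhammer_map (algebraMap ℝ ℂ), Polynomial.eval_map]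
  exact Polynomial.eval₂_at_apply (algebraMap ℝ ℂ) x

lemma gamma_add_nat {x : ℝ} (hx : 0 < x) (l : ℕ) :
    Real.Gamma (x + l) = Real.Gamma x * (ascPochhammer ℝ l).eval x := by
  induction l with
  | zero => simp
  | succ l ih =>
    have hxl : (0 : ℝ) < x + l := by positivity
    have : x + (l + 1 : ℕ) = (x + l) + 1 := by push_cast; ring
    rw [this, Real.Gamma_add_one hxl.ne', ih, ascPochhammer_succ_eval]
    ring

lemma mul_eulerBeta_eq {x : ℝ} (hx : 0 < x) (l : ℕ) :
    x * eulerBeta x ((l : ℝ) + 1) =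
      (Nat.factorial l : ℝ) / (ascPochhammer ℝ l).eval (x + 1) := by
  have h1 : Real.Gamma ((l : ℝ) + 1) = Nat.factorial l := Real.Gamma_nat_eq_factorial l
  have h2 : Real.Gamma (x + ((l : ℝ) + 1)) = x * Real.Gamma x * (ascPochhammer ℝ l).eval (x + 1) := by
    have : x + ((l : ℝ) + 1) = (x + 1) + (l : ℝ) := by ring
    rw [this, gamma_add_nat (by positivity) l, Real.Gamma_add_one hx.ne']
  have hG : Real.Gamma x ≠ 0 := (Real.Gamma_pos_of_pos hx).ne'
  have hP : (ascPochhammer ℝ l).eval (x + 1) ≠ 0 :=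
    (ascPochhammer_pos l _ (by positivity)).ne'
  rw [eulerBeta, h1, h2]
  field_simp

lemma asc_neg_nat_ne_zero {n β : ℕ} (h : n ≤ β) :
    (ascPochhammer ℂ n).eval (-(β : ℂ)) ≠ 0 := by
  induction n with
  | zero => simp
  | succ n ih =>
    rw [ascPochhammer_succ_eval]
    refine mul_ne_zero (ih (Nat.le_of_succ_le h)) ?_
    have hn : (n : ℂ) ≠ (β : ℂ) := by
      exact_mod_cast (Nat.ne_of_lt (Nat.lt_of_succ_le h))
    intro hc
    apply hn
    linear_combination hc

/-- shifted-index rearrangement identity. -/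
theorem stmt9 (i₀ β : ℕ) (h : i₀ ≤ β) (lam γ : ℝ)
    (h1 : 0 < 1 + lam / 2) (h2 : 0 < γ + lam / 2)
    (h3 : 0 < (i₀ : ℝ) + lam / 2) (h4 : 0 < (i₀ : ℝ) - 1 + γ + lam / 2) (z : ℂ) :
    ∑ i ∈ Finset.Icc i₀ β,
      ((ascPochhammer ℂ i).eval (-(β : ℂ)) *
        (ascPochhammer ℂ i₀).eval (1 + (lam : ℂ) / 2) *
        (ascPochhammer ℂ i₀).eval ((γ : ℂ) + (lam : ℂ) / 2)) /
      ((ascPochhammer ℂ i₀).eval (-(β : ℂ)) *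
        (ascPochhammer ℂ i).eval (1 + (lam : ℂ) / 2) *
        (ascPochhammer ℂ i).eval ((γ : ℂ) + (lam : ℂ) / 2)) * z ^ i =
    z ^ i₀ * ∑ l ∈ Finset.range (β - i₀ + 1),
      ((((i₀ : ℝ) + lam / 2) * ((i₀ : ℝ) - 1 + γ + lam / 2) *
        eulerBeta ((i₀ : ℝ) + lam / 2) ((l : ℝ) + 1) *
        eulerBeta ((i₀ : ℝ) - 1 + γ + lam / 2) ((l : ℝ) + 1) : ℝ) : ℂ) *
      ((ascPochhammer ℂ l).eval (-((β - i₀ : ℕ) : ℂ)) /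
        ((ascPochhammer ℂ l).eval 1 * (Nat.factorial l : ℂ))) * z ^ l := by
  rw [← Finset.Ico_add_one_right_eq_Icc, Finset.sum_Ico_eq_sum_range, Finset.mul_sum]
  have hrange : β + 1 - i₀ = β - i₀ + 1 := by omega
  rw [hrange]
  apply Finset.sum_congr rfl
  intro l hl
  have hl' : l ≤ β - i₀ := by
    simpa [Nat.lt_succ_iff] using hl
  -- abbreviations
  set a : ℝ := 1 + lam / 2 with ha
  set b : ℝ := γ + lam / 2 with hb
  have hca : (1 + (lam : ℂ) / 2) = ((a : ℝ) : ℂ) := by push_cast [ha]; ring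
  have hcb : ((γ : ℂ) + (lam : ℂ) / 2) = ((b : ℝ) : ℂ) := by push_cast [hb]; ring
  -- split Pochhammers at i₀ + l
  have hsplit : ∀ x : ℂ, (ascPochhammer ℂ (i₀ + l)).eval x =
      (ascPochhammer ℂ i₀).eval x * (ascPochhammer ℂ l).eval (x + i₀) :=
    fun x => asc_add_eval i₀ l x
  have hnegshift : (-(β : ℂ)) + (i₀ : ℂ) = -((β - i₀ : ℕ) : ℂ) := by
    push_cast [Nat.cast_sub h]; ring
  -- nonzeroness
  have hP0 : (ascPochhammer ℂ i₀).eval (-(β : ℂ)) ≠ 0 := asc_neg_nat_ne_zero h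
  have hAR : (0 : ℝ) < (ascPochhammer ℝ i₀).eval a := ascPochhammer_pos _ _ h1
  have hBR : (0 : ℝ) < (ascPochhammer ℝ i₀).eval b := ascPochhammer_pos _ _ h2
  have hAlR : (0 : ℝ) < (ascPochhammer ℝ l).eval (a + i₀) := ascPochhammer_pos _ _ (by positivity)
  have hBlR : (0 : ℝ) < (ascPochhammer ℝ l).eval (b + i₀) := ascPochhammer_pos _ _ (by positivity)
  -- RHS real coefficient
  have e1 : ((i₀ : ℝ) + lam / 2) * eulerBeta ((i₀ : ℝ) + lam / 2) ((l : ℝ) + 1) =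
      (Nat.factorial l : ℝ) / (ascPochhammer ℝ l).eval (a + i₀) := by
    have := mul_eulerBeta_eq h3 l
    rwa [show (i₀ : ℝ) + lam / 2 + 1 = a + i₀ by rw [ha]; ring] at this
  have e2 : ((i₀ : ℝ) - 1 + γ + lam / 2) * eulerBeta ((i₀ : ℝ) - 1 + γ + lam / 2) ((l : ℝ) + 1) =
      (Nat.factorial l : ℝ) / (ascPochhammer ℝ l).eval (b + i₀) := by
    have := mul_eulerBeta_eq h4 l
    rwa [show (i₀ : ℝ) - 1 + γ + lam / 2 + 1 = b + i₀ by rw [hb]; ring] at this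
  have hcoeff : (((i₀ : ℝ) + lam / 2) * ((i₀ : ℝ) - 1 + γ + lam / 2) *
        eulerBeta ((i₀ : ℝ) + lam / 2) ((l : ℝ) + 1) *
        eulerBeta ((i₀ : ℝ) - 1 + γ + lam / 2) ((l : ℝ) + 1) : ℝ) =
      ((Nat.factorial l : ℝ) / (ascPochhammer ℝ l).eval (a + i₀)) *
        ((Nat.factorial l : ℝ) / (ascPochhammer ℝ l).eval (b + i₀)) := by
    rw [← e1, ← e2]; ring
  rw [hcoeff]
  rw [hsplit (-(β : ℂ)), hnegshift, hca, hcb, hsplit, hsplit]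
  have castai : ((a : ℝ) : ℂ) + (i₀ : ℂ) = ((a + (i₀ : ℝ) : ℝ) : ℂ) := by push_cast; ring
  have castbi : ((b : ℝ) : ℂ) + (i₀ : ℂ) = ((b + (i₀ : ℝ) : ℝ) : ℂ) := by push_cast; ring
  rw [castai, castbi, asc_eval_real_cast, asc_eval_real_cast, asc_eval_real_cast,
    asc_eval_real_cast, ascPochhammer_eval_one]
  rw [pow_add]
  push_cast
  have hf : (Nat.factorial l : ℂ) ≠ 0 := by exact_mod_cast (Nat.factorial_pos l).ne'
  have hA : Complex.ofReal ((ascPochhammer ℝ i₀).eval a) ≠ 0 := by exact_mod_cast hAR.ne'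
  have hB : Complex.ofReal ((ascPochhammer ℝ i₀).eval b) ≠ 0 := by exact_mod_cast hBR.ne'
  have hAl : Complex.ofReal ((ascPochhammer ℝ l).eval (a + i₀)) ≠ 0 := by exact_mod_cast hAlR.ne'
  have hBl : Complex.ofReal ((ascPochhammer ℝ l).eval (b + i₀)) ≠ 0 := by exact_mod_cast hBlR.ne'
  field_simp
end
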